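/- The order ▷_ℓ on terms and sequences over a finite signature with a well-founded precedence is well-founded. -/

import Mathlib

/-- First-order terms over signature `F` and variables `V`. -/
inductive Trm (F V : Type) where
  | var : V → Trm F V
  | fn : F → List (Trm F V) → Trm F V

/-- `SSub s t` : `t` is a strict subterm of `s`. -/
inductive SSub {F V : Type} : Trm F V → Trm F V → Prop where
  | arg {f ts t} : t ∈ ts → SSub (Trm.fn f ts) t
  | trans {f ts s t} : s ∈ ts → SSub s t → SSub (Trm.fn f ts) t

/-- Reflexive closure of a relation, used for product extensions. -/
def EqOr {α : Type} (r : α → α → Prop) (a b : α) : Prop := a = b ∨ r a b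

/-- Product extension of a relation on lists: componentwise equal-or-smaller,
with at least one component strictly smaller. -/
def ProdExtL {α : Type} (r : α → α → Prop) (xs ys : List α) : Prop :=
  List.Forall₂ (EqOr r) xs ys ∧
    ∃ i, ∃ (h₁ : i < xs.length) (h₂ : i < ys.length), r xs[i] ys[i]

/-- Elements compared by `▷_ℓ`: terms (inl) or sequences of terms (inr). -/
abbrev TS (F V : Type) := Trm F V ⊕ List (Trm F V)

/-- Identification of a term with the singleton sequence. -/
def toL {F V : Type} : TS F V → List (Trm F V) := Sum.elim (fun t => [t]) id

mutual
  /-- The auxiliary order `▷_ℓ` (Definition of `poel`) on terms and sequences,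
  induced by a precedence `prec` and the width bound `ℓ`. -/
  inductive Poel {F V : Type} (prec : F → F → Prop) (ℓ : ℕ) : TS F V → TS F V → Prop where
    /- clause (1): precedence descent to strict subterms, width at most ℓ -/
    | ia {f g : F} {ss ts : List (Trm F V)} :
        prec f g → (∀ t ∈ ts, SSub (Trm.fn f ss) t) → ts.length ≤ ℓ →
        Poel prec ℓ (Sum.inl (Trm.fn f ss)) (Sum.inl (Trm.fn g ts))
    /- clause (2): same symbol, product extension of the strict-subterm order -/
    | tsc {f : F} {ss ts : List (Trm F V)} :
        ProdExtL SSub ss ts →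
        Poel prec ℓ (Sum.inl (Trm.fn f ss)) (Sum.inl (Trm.fn f ts))
    /- clause (3): descent from a term to a sequence of at most ℓ smaller terms -/
    | ialst {f : F} {ss ts : List (Trm F V)} :
        (∀ t ∈ ts, Poel prec ℓ (Sum.inl (Trm.fn f ss)) (Sum.inl t)) → ts.length ≤ ℓ →
        Poel prec ℓ (Sum.inl (Trm.fn f ss)) (Sum.inr ts)
    /- clause (4): sequences, splitting `ts = b₁ ++ ⋯ ++ b_k` with
       `⟨s₁,…,s_k⟩` greater than `⟨b₁,…,b_k⟩` in the product extension of `▷_ℓ` -/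
    | ms {ss ts : List (Trm F V)} (bs : List (TS F V)) :
        ts = (bs.map toL).flatten →
        PoelProd prec ℓ (ss.map Sum.inl) bs →
        Poel prec ℓ (Sum.inr ss) (Sum.inr ts)

  /-- Product extension of `▷_ℓ`: componentwise equal-or-smaller with at
  least one strict decrease. -/
  inductive PoelProd {F V : Type} (prec : F → F → Prop) (ℓ : ℕ) :
      List (TS F V) → List (TS F V) → Prop where
    | strict {a b as bs} : Poel prec ℓ a b → PoelGE prec ℓ as bs →
        PoelProd prec ℓ (a :: as) (b :: bs)
    | cons_eq {a as bs} : PoelProd prec ℓ as bs → PoelProd prec ℓ (a :: as) (a :: bs)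
    | cons_lt {a b as bs} : Poel prec ℓ a b → PoelProd prec ℓ as bs →
        PoelProd prec ℓ (a :: as) (b :: bs)

  /-- Componentwise equal-or-smaller (w.r.t. `▷_ℓ`) lists of equal length. -/
  inductive PoelGE {F V : Type} (prec : F → F → Prop) (ℓ : ℕ) :
      List (TS F V) → List (TS F V) → Prop where
    | nil : PoelGE prec ℓ [] []
    | cons_eq {a as bs} : PoelGE prec ℓ as bs → PoelGE prec ℓ (a :: as) (a :: bs)
    | cons_lt {a b as bs} : Poel prec ℓ a b → PoelGE prec ℓ as bs →
        PoelGE prec ℓ (a :: as) (b :: bs)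
end


section AuxPoel

open Relation

/-! ### CutExpand lifting lemmas -/

variable {α : Type} {b : α → α → Prop}

private theorem tgAddRight {x' x : Multiset α} (y : Multiset α)
    (h : TransGen (CutExpand b) x' x) :
    TransGen (CutExpand b) (x' + y) (x + y) :=
  TransGen.lift (· + y) (fun _ _ hc => (cutExpand_add_right y).mpr hc) _ _ h

private theorem tgAddLeft {x' x : Multiset α} (y : Multiset α)
    (h : TransGen (CutExpand b) x' x) :
    TransGen (CutExpand b) (y + x') (y + x) :=
  TransGen.lift (y + ·) (fun _ _ hc => (cutExpand_add_left y).mpr hc) _ _ h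

private theorem rtgAddRight {x' x : Multiset α} (y : Multiset α)
    (h : ReflTransGen (CutExpand b) x' x) :
    ReflTransGen (CutExpand b) (x' + y) (x + y) :=
  ReflTransGen.lift (· + y) (fun _ _ hc => (cutExpand_add_right y).mpr hc) _ _ h

private theorem rtgAddLeft {x' x : Multiset α} (y : Multiset α)
    (h : ReflTransGen (CutExpand b) x' x) :
    ReflTransGen (CutExpand b) (y + x') (y + x) :=
  ReflTransGen.lift (y + ·) (fun _ _ hc => (cutExpand_add_left y).mpr hc) _ _ h

private theorem tgAddTg {x' x y' y : Multiset α}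
    (hx : TransGen (CutExpand b) x' x) (hy : TransGen (CutExpand b) y' y) :
    TransGen (CutExpand b) (x' + y') (x + y) :=
  (tgAddLeft x' hy).trans (tgAddRight y hx)

private theorem tgAddRtg {x' x y' y : Multiset α}
    (hx : TransGen (CutExpand b) x' x) (hy : ReflTransGen (CutExpand b) y' y) :
    TransGen (CutExpand b) (x' + y') (x + y) :=
  TransGen.trans_right (rtgAddLeft x' hy) (tgAddRight y hx)

private theorem rtgAddRtg {x' x y' y : Multiset α}
    (hx : ReflTransGen (CutExpand b) x' x) (hy : ReflTransGen (CutExpand b) y' y) :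
    ReflTransGen (CutExpand b) (x' + y') (x + y) :=
  (rtgAddLeft x' hy).trans (rtgAddRight y hx)

/-! ### From `ProdExtL` to `CutExpand` chains -/

private theorem forall2_rtg {r : α → α → Prop} :
    ∀ {xs ys : List α}, List.Forall₂ (EqOr r) xs ys →
      ReflTransGen (CutExpand (fun a c => r c a)) (↑ys) (↑xs) := by
  intro xs ys h
  induction h with
  | nil => exact .refl
  | @cons a c l₁ l₂ hac htail ih =>
    have ih' : ReflTransGen (CutExpand (fun a c => r c a))
        ({a} + (↑l₂ : Multiset α)) ({a} + (↑l₁ : Multiset α)) := rtgAddLeft _ ih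
    rcases hac with rfl | hr
    · simpa [Multiset.singleton_add] using ih'
    · have step : CutExpand (fun a c => r c a)
          ({c} + (↑l₂ : Multiset α)) ({a} + (↑l₂ : Multiset α)) :=
        (cutExpand_add_right (↑l₂)).mpr (cutExpand_singleton_singleton (r := fun a c => r c a) hr)
    -- chain: {c}+l₂ ⟶ {a}+l₂ ⟶* {a}+l₁
      have := ReflTransGen.head step ((rtgAddLeft ({a} : Multiset α) ih))
      simpa [Multiset.singleton_add] using this

private theorem prodExtL_tg {r : α → α → Prop} :
    ∀ {xs ys : List α}, ProdExtL r xs ys →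
      TransGen (CutExpand (fun a c => r c a)) (↑ys) (↑xs) := by
  intro xs ys h
  obtain ⟨hf, i, h1, h2, hi⟩ := h
  induction hf generalizing i with
  | nil => exact absurd h1 (by simp)
  | @cons a c l₁ l₂ hac htail ih =>
    cases i with
    | zero =>
      simp only [List.getElem_cons_zero] at hi
      have step : CutExpand (fun a c => r c a)
          ({c} + (↑l₂ : Multiset α)) ({a} + (↑l₂ : Multiset α)) :=
        (cutExpand_add_right (↑l₂)).mpr (cutExpand_singleton_singleton (r := fun a c => r c a) hi)
      have := TransGen.head' step (rtgAddLeft ({a} : Multiset α) (forall2_rtg htail))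
      simpa [Multiset.singleton_add] using this
    | succ j =>
      simp only [List.getElem_cons_succ] at hi
      have h1' : j < l₁.length := by simpa using Nat.lt_of_succ_lt_succ h1
      have h2' : j < l₂.length := by simpa using Nat.lt_of_succ_lt_succ h2
      have htg := ih j h1' h2' hi
      rcases hac with rfl | hr
      · have := tgAddLeft ({a} : Multiset α) htg
        simpa [Multiset.singleton_add] using this
      · have step : CutExpand (fun a c => r c a)
            ({c} + (↑l₂ : Multiset α)) ({a} + (↑l₂ : Multiset α)) :=
          (cutExpand_add_right (↑l₂)).mpr (cutExpand_singleton_singleton (r := fun a c => r c a) hr)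
        have := TransGen.head step (tgAddLeft ({a} : Multiset α) htg)
        simpa [Multiset.singleton_add] using this

end AuxPoel

section AuxPoel2

open Relation

variable {F V : Type}

/-- `sizeOf` decreases along strict subterms. -/
private theorem SSub.sizeOf_lt : ∀ {s t : Trm F V}, SSub s t → sizeOf t < sizeOf s := by
  intro s t h
  induction h with
  | @arg f ts t hmem =>
    have := List.sizeOf_lt_of_mem hmem
    have h2 := Trm.fn.sizeOf_spec f ts
    omega
  | @trans f ts s t hmem _ ih =>
    have := List.sizeOf_lt_of_mem hmem
    have h2 := Trm.fn.sizeOf_spec f ts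
    omega

private theorem wfSub : WellFounded (fun t s : Trm F V => SSub s t) :=
  Subrelation.wf (fun h => SSub.sizeOf_lt h)
    (InvImage.wf sizeOf (Nat.lt_wfRel.wf))

/-- Terms smaller-than relation induced by `▷_ℓ`. -/
private def BtRel (prec : F → F → Prop) (ℓ : ℕ) (s t : Trm F V) : Prop :=
  Poel prec ℓ (Sum.inl t) (Sum.inl s)

/-- Well-foundedness of `▷_ℓ` restricted to terms. -/
private theorem bt_wf [Finite F] (prec : F → F → Prop)
    (hirr : ∀ f, ¬ prec f f) (htrans : ∀ f g h, prec f g → prec g h → prec f h)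
    (ℓ : ℕ) :
    WellFounded (BtRel (V := V) prec ℓ) := by
  have hprec : WellFounded (fun g f : F => prec f g) := by
    haveI : IsTrans F (fun g f => prec f g) := ⟨fun a b c h1 h2 => htrans _ _ _ h2 h1⟩
    haveI : IsIrrefl F (fun g f => prec f g) := ⟨fun a h => hirr a h⟩
    exact Finite.wellFounded_of_trans_of_irrefl _
  have hargs : WellFounded
      (TransGen (CutExpand (fun t s : Trm F V => SSub s t))) :=
    wfSub.cutExpand.transGen
  have hpair := hprec.prod_lex hargs
  constructor
  intro t
  have key : ∀ p : F × Multiset (Trm F V), ∀ (f : F) (ss : List (Trm F V)), p = (f, (↑ss : Multiset (Trm F V))) →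
      Acc (BtRel (V := V) prec ℓ) (Trm.fn f ss) := by
    intro p
    induction p using hpair.induction with
    | _ q ih =>
      rintro f ss rfl
      constructor
      intro s hs
      cases hs with
      | ia hpg hsub hlen =>
        rename_i g ts
        exact ih (g, (↑ts : Multiset (Trm F V))) (Prod.Lex.left _ _ hpg) g ts rfl
      | tsc hpe =>
        rename_i ts
        exact ih (f, (↑ts : Multiset (Trm F V)))
          (Prod.Lex.right _ (prodExtL_tg hpe)) f ts rfl
  cases t with
  | var v =>
    constructor
    intro s hs
    cases hs
  | fn f ss => exact key (f, (↑ss : Multiset (Trm F V))) f ss rfl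

/-- The multiset measure on `TS`. -/
private def muTS : TS F V → Multiset (Trm F V) := fun a => (↑(toL a) : Multiset (Trm F V))

private theorem muTS_flatten (bs : List (TS F V)) :
    (↑((bs.map toL).flatten) : Multiset (Trm F V)) = (bs.map muTS).sum := by
  induction bs with
  | nil => rfl
  | cons b bs ih =>
    rw [List.map_cons, List.flatten_cons, List.map_cons, List.sum_cons, ← ih,
      ← Multiset.coe_add]
    rfl

private theorem muTS_inl (ss : List (Trm F V)) :
    (((ss.map Sum.inl).map muTS).sum : Multiset (Trm F V)) = (↑ss : Multiset (Trm F V)) := by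
  induction ss with
  | nil => rfl
  | cons s ss ih =>
    simp only [List.map_cons, List.sum_cons, ih]
    rw [← Multiset.cons_coe, ← Multiset.singleton_add]
    rfl

end AuxPoel2

section AuxPoel3
open Relation
variable {F V : Type}

private theorem poel_decrease (prec : F → F → Prop) (ℓ : ℕ) {a b : TS F V}
    (h : Poel prec ℓ a b) :
    TransGen (CutExpand (BtRel prec ℓ)) (muTS b) (muTS a) := by
  refine Poel.rec
    (motive_1 := fun a b _ => TransGen (CutExpand (BtRel prec ℓ)) (muTS b) (muTS a))
    (motive_2 := fun as bs _ => TransGen (CutExpand (BtRel prec ℓ))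
      ((bs.map muTS).sum) ((as.map muTS).sum))
    (motive_3 := fun as bs _ => ReflTransGen (CutExpand (BtRel prec ℓ))
      ((bs.map muTS).sum) ((as.map muTS).sum))
    ?_ ?_ ?_ ?_ ?_ ?_ ?_ ?_ ?_ ?_ h
  · -- ia
    intro f g ss ts hpg hsub hlen
    simp only [muTS, toL, Sum.elim_inl, Multiset.coe_singleton]
    exact TransGen.single
      (cutExpand_singleton_singleton (Poel.ia hpg hsub hlen : BtRel prec ℓ _ _))
  · -- tsc
    intro f ss ts hpe
    simp only [muTS, toL, Sum.elim_inl, Multiset.coe_singleton]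
    exact TransGen.single
      (cutExpand_singleton_singleton (Poel.tsc hpe : BtRel prec ℓ _ _))
  · -- ialst
    intro f ss ts hall hlen _
    simp only [muTS, toL, Sum.elim_inl, Sum.elim_inr, id, Multiset.coe_singleton]
    exact TransGen.single
      (cutExpand_singleton (fun t ht => hall t (by simpa using ht)))
  · -- ms
    intro ss ts bs hts hprod ih
    subst hts
    have e1 : muTS (Sum.inr ((bs.map toL).flatten) : TS F V) = (bs.map muTS).sum :=
      muTS_flatten bs
    have e2 : muTS (Sum.inr ss : TS F V) = ((ss.map Sum.inl).map muTS).sum :=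
      (muTS_inl ss).symm
    rw [e1, e2]
    exact ih
  · -- PoelProd.strict
    intro a b as bs h1 h2 ih1 ih3
    simp only [List.map_cons, List.sum_cons]
    exact tgAddRtg ih1 ih3
  · -- PoelProd.cons_eq
    intro a as bs h ih
    simp only [List.map_cons, List.sum_cons]
    exact tgAddLeft _ ih
  · -- PoelProd.cons_lt
    intro a b as bs h1 h2 ih1 ih2
    simp only [List.map_cons, List.sum_cons]
    exact tgAddTg ih1 ih2
  · -- PoelGE.nil
    exact .refl
  · -- PoelGE.cons_eq
    intro a as bs h ih
    simp only [List.map_cons, List.sum_cons]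
    exact rtgAddLeft _ ih
  · -- PoelGE.cons_lt
    intro a b as bs h1 h2 ih1 ih3
    simp only [List.map_cons, List.sum_cons]
    exact rtgAddRtg ih1.to_reflTransGen ih3

end AuxPoel3

/-- `▷_ℓ` over a finite signature with a strict-order precedence is
well-founded. -/
theorem poel_wellFounded {F V : Type} [Finite F] (prec : F → F → Prop)
    (hirr : ∀ f, ¬ prec f f) (htrans : ∀ f g h, prec f g → prec g h → prec f h)
    (ℓ : ℕ) (hℓ : 1 ≤ ℓ) :
    WellFounded (fun b a : TS F V => Poel prec ℓ a b) := by
  have hterm : WellFounded (BtRel (V := V) prec ℓ) := bt_wf prec hirr htrans ℓ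
  have hwf : WellFounded
      (InvImage (Relation.TransGen (Relation.CutExpand (BtRel prec ℓ))) muTS) :=
    InvImage.wf muTS hterm.cutExpand.transGen
  exact Subrelation.wf (fun {x y} h => poel_decrease prec ℓ h) hwf
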